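/- Fix n ≥ 2 and i ∈ {1, ..., n+1}. Let S^i : ℝ^(n+1) → ℝ^n be the map deleting the i-th coordinate, and let T_n : ℝ^n → H_(n-1) be the projection along (1, ..., 1), i.e., T_n(y) = y - ((y_1 + ... + y_n)/n)·(1, ..., 1). Then the image of A_n under T_n ∘ S^i equals A*_(n-1), and likewise the image of A*_n under T_n ∘ S^i equals A*_(n-1). -/

import Mathlib

/-- The lattice `A_{m-1} = ℤ^m ∩ H_{m-1}`, indexed by the ambient dimension `m`. -/
def AlatAmb (m : ℕ) : Set (EuclideanSpace ℝ (Fin m)) :=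
  {x | (∀ k, ∃ z : ℤ, x k = (z : ℝ)) ∧ ∑ i, x i = 0}

/-- The permutohedral lattice `A*_{m-1}`, indexed by the ambient dimension `m`:
all points of the hyperplane `∑ x_i = 0` in `ℝ^m` with integer coordinate
differences. -/
def AstarAmb (m : ℕ) : Set (EuclideanSpace ℝ (Fin m)) :=
  {x | (∑ i, x i = 0) ∧ ∀ i j, ∃ z : ℤ, x i - x j = (z : ℝ)}

/-- `S^i : ℝ^(n+1) → ℝ^n`, deletion of the `i`-th coordinate. -/
def delCoord (n : ℕ) (i : Fin (n + 1)) (x : EuclideanSpace ℝ (Fin (n + 1))) :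
    EuclideanSpace ℝ (Fin n) :=
  WithLp.toLp 2 (fun k => x (i.succAbove k))

/-- `T_n : ℝ^n → H_{n-1}`, projection along `(1, …, 1)`. -/
noncomputable def projT (n : ℕ) (y : EuclideanSpace ℝ (Fin n)) :
    EuclideanSpace ℝ (Fin n) :=
  WithLp.toLp 2 (fun k => y k - (∑ l, y l) / (n : ℝ))

lemma mem_Astar_of_diffs (n : ℕ) (hn : 0 < n) (i : Fin (n + 1))
    (x : EuclideanSpace ℝ (Fin (n + 1)))
    (hx : ∀ j k : Fin (n + 1), ∃ z : ℤ, x j - x k = (z : ℝ)) :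
    (projT n ∘ delCoord n i) x ∈ AstarAmb n := by
  have hn' : (n : ℝ) ≠ 0 := Nat.cast_ne_zero.mpr hn.ne'
  constructor
  · show ∑ k, (delCoord n i x k - _) = 0
    rw [Finset.sum_sub_distrib, Finset.sum_const, Finset.card_univ, Fintype.card_fin,
      nsmul_eq_mul]
    field_simp
    simp
  · intro j k
    obtain ⟨z, hz⟩ := hx (i.succAbove j) (i.succAbove k)
    refine ⟨z, ?_⟩
    show (delCoord n i x j - _) - (delCoord n i x k - _) = _
    simp only [delCoord]
    linarith

lemma Astar_surj (n : ℕ) (hn : 0 < n) (i : Fin (n + 1)) (w : EuclideanSpace ℝ (Fin n))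
    (hw : w ∈ AstarAmb n) :
    ∃ x ∈ AlatAmb (n + 1), (projT n ∘ delCoord n i) x = w := by
  have hn' : (n : ℝ) ≠ 0 := Nat.cast_ne_zero.mpr hn.ne'
  set i0 : Fin n := ⟨0, hn⟩
  set w0 : ℝ := w i0 with hw0
  choose m hm using fun k => hw.2 k i0
  have hsum : ∑ k, (w k - w0) = -((n : ℝ) * w0) := by
    rw [Finset.sum_sub_distrib, hw.1, Finset.sum_const, Finset.card_univ, Fintype.card_fin,
      nsmul_eq_mul]
    ring
  have hkey : (n : ℝ) * w0 = -(∑ k, (m k : ℝ)) := by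
    have : ∑ k, (w k - w0) = ∑ k, (m k : ℝ) := Finset.sum_congr rfl fun k _ => hm k
    linarith [this ▸ hsum]
  set x : EuclideanSpace ℝ (Fin (n + 1)) :=
    WithLp.toLp 2 (i.insertNth ((n : ℝ) * w0) (fun k => w k - w0) : Fin (n + 1) → ℝ) with hx
  have hxi : x i = (n : ℝ) * w0 := by simp [hx]
  have hxs : ∀ k, x (i.succAbove k) = w k - w0 := fun k => by simp [hx]
  refine ⟨x, ⟨?_, ?_⟩, ?_⟩
  · intro j
    refine i.succAboveCases ?_ ?_ j
    · exact ⟨-(∑ k, m k), by rw [hxi, hkey]; push_cast; ring⟩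
    · exact fun k => ⟨m k, by rw [hxs k, hm k]⟩
  · rw [Fin.sum_univ_succAbove _ i, hxi]
    rw [Finset.sum_congr rfl fun k _ => hxs k, hsum]
    ring
  · ext k
    show x (i.succAbove k) - (∑ l, x (i.succAbove l)) / (n : ℝ) = w k
    rw [hxs k, Finset.sum_congr rfl fun l _ => hxs l, hsum]
    field_simp
    ring

/-- For `n ≥ 2` and any index `i`, the image of `A_n` under `T_n ∘ S^i` equals
`A*_{n-1}`, and likewise the image of `A*_n` under `T_n ∘ S^i` equals `A*_{n-1}`. -/
theorem proj_image_eq_Astar (n : ℕ) (hn : 2 ≤ n) (i : Fin (n + 1)) :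
    (projT n ∘ delCoord n i) '' AlatAmb (n + 1) = AstarAmb n ∧
    (projT n ∘ delCoord n i) '' AstarAmb (n + 1) = AstarAmb n := by
  have hn0 : 0 < n := by omega
  have hAsub : AlatAmb (n + 1) ⊆ AstarAmb (n + 1) := by
    rintro x ⟨hint, hsum⟩
    refine ⟨hsum, fun j k => ?_⟩
    obtain ⟨a, ha⟩ := hint j
    obtain ⟨b, hb⟩ := hint k
    exact ⟨a - b, by rw [ha, hb]; push_cast; ring⟩
  constructor
  · apply Set.Subset.antisymm
    · rintro _ ⟨x, hx, rfl⟩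
      exact mem_Astar_of_diffs n hn0 i x (hAsub hx).2
    · intro w hw
      obtain ⟨x, hx, hxw⟩ := Astar_surj n hn0 i w hw
      exact ⟨x, hx, hxw⟩
  · apply Set.Subset.antisymm
    · rintro _ ⟨x, hx, rfl⟩
      exact mem_Astar_of_diffs n hn0 i x hx.2
    · intro w hw
      obtain ⟨x, hx, hxw⟩ := Astar_surj n hn0 i w hw
      exact ⟨x, hAsub hx, hxw⟩
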